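/- There exists a constant C > 0 such that for every t ∈ ℝ and every φ : ℤ_{≥1} → ℂ with Σ_{k≥1} |φ(k)| < ∞, the solution of the discrete Schrödinger equation on the positive integers with Dirichlet boundary condition at j = 0, given by u(t,j) := Σ_{k≥1} (K_t(j-k) - K_t(j+k)) φ(k) for j ≥ 1, satisfies sup_{j≥1} |u(t,j)| ≤ C (1+|t|)^{-1/3} Σ_{k≥1} |φ(k)|. -/

import Mathlib

open Real MeasureTheory intervalIntegral

/-- The discrete Schrödinger kernel
`K t j = (1/(2π)) ∫_{-π}^{π} e^{-4 i t sin²(ξ/2)} e^{i j ξ} dξ`. -/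
noncomputable def schrodingerKernel (t : ℝ) (j : ℤ) : ℂ :=
  (1 / (2 * Real.pi)) * ∫ ξ in (-Real.pi)..Real.pi,
    Complex.exp (-4 * Complex.I * (t : ℂ) * ((Real.sin (ξ / 2) : ℂ)) ^ 2) *
      Complex.exp (Complex.I * (j : ℂ) * (ξ : ℂ))


lemma my_interval_integral_conj (f : ℝ → ℂ) (a b : ℝ) :
    ∫ x in a..b, (starRingEnd ℂ) (f x) = (starRingEnd ℂ) (∫ x in a..b, f x) := by
  simp [intervalIntegral, _root_.integral_conj]

/-- First-derivative van der Corput, positive `ψ'` case. -/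
lemma vdc1_pos (ψ ψ' ψ'' : ℝ → ℝ) (a b ρ : ℝ) (hab : a ≤ b) (hρ : 0 < ρ)
    (hd1 : ∀ x, HasDerivAt ψ (ψ' x) x) (hd2 : ∀ x, HasDerivAt ψ' (ψ'' x) x)
    (hc2 : Continuous ψ'')
    (hlow : ∀ x ∈ Set.Icc a b, ρ ≤ ψ' x)
    (hsgn : (∀ x ∈ Set.Icc a b, 0 ≤ ψ'' x) ∨ (∀ x ∈ Set.Icc a b, ψ'' x ≤ 0)) :
    ‖∫ x in a..b, Complex.exp (Complex.I * ψ x)‖ ≤ 3 / ρ := by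
  have hc1 : Continuous ψ' := continuous_iff_continuousAt.2 fun x => (hd2 x).continuousAt
  have hc0 : Continuous ψ := continuous_iff_continuousAt.2 fun x => (hd1 x).continuousAt
  have huIcc : Set.uIcc a b = Set.Icc a b := Set.uIcc_of_le hab
  have hpos : ∀ x ∈ Set.Icc a b, (0:ℝ) < ψ' x := fun x hx => lt_of_lt_of_le hρ (hlow x hx)
  have hne : ∀ x ∈ Set.Icc a b, (Complex.I * (ψ' x : ℂ)) ≠ 0 := by
    intro x hx
    exact mul_ne_zero Complex.I_ne_zero (by exact_mod_cast (hpos x hx).ne')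
  set F : ℝ → ℂ := fun x => Complex.exp (Complex.I * ψ x) / (Complex.I * ψ' x) with hF
  set e : ℝ → ℂ := fun x => Complex.exp (Complex.I * ψ x) with he
  set r : ℝ → ℂ := fun x => Complex.I * Complex.exp (Complex.I * ψ x) * (ψ'' x) / (ψ' x)^2
    with hr
  have hce : Continuous e := by fun_prop
  have hcr : ContinuousOn r (Set.Icc a b) := by
    apply ContinuousOn.div
    · fun_prop
    · fun_prop
    · intro x hx
      exact pow_ne_zero _ (by exact_mod_cast (hpos x hx).ne')
  have hderivF : ∀ x ∈ Set.Icc a b, HasDerivAt F (e x + r x) x := by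
    intro x hx
    have hu : HasDerivAt (fun y => Complex.exp (Complex.I * ψ y))
        (Complex.I * (ψ' x) * Complex.exp (Complex.I * ψ x)) x := by
      have h1 : HasDerivAt (fun y => (ψ y : ℂ)) (ψ' x : ℂ) x := (hd1 x).ofReal_comp
      have h2 : HasDerivAt (fun y => Complex.I * (ψ y : ℂ)) (Complex.I * ψ' x) x :=
        h1.const_mul _
      simpa [mul_comm] using h2.cexp
    have hv : HasDerivAt (fun y => Complex.I * (ψ' y : ℂ)) (Complex.I * ψ'' x) x :=
      ((hd2 x).ofReal_comp).const_mul _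
    have hdiv := hu.div hv (hne x hx)
    apply hdiv.congr_deriv
    have hne' : (ψ' x : ℂ) ≠ 0 := by exact_mod_cast (hpos x hx).ne'
    have hIsq : (Complex.I : ℂ)^2 = -1 := Complex.I_sq
    field_simp [e, r]
    have hrr : (ψ' x : ℂ)^2 * r x = Complex.I * Complex.exp (Complex.I * ψ x) * ψ'' x := by
      simp only [r]; field_simp
    simp only [e]
    linear_combination (-Complex.I) * hrr + (-(Complex.exp (Complex.I * ψ x)) * ψ'' x) * hIsq
  have hintr : IntervalIntegrable r volume a b :=
    (hcr.mono (by rw [huIcc])).intervalIntegrable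
  have hinte : IntervalIntegrable e volume a b := hce.intervalIntegrable _ _
  have hFTC : ∫ x in a..b, (e x + r x) = F b - F a := by
    apply intervalIntegral.integral_eq_sub_of_hasDerivAt
    · intro x hx; exact hderivF x (huIcc ▸ hx)
    · exact hinte.add hintr
  have hsplit : ∫ x in a..b, (e x + r x) = (∫ x in a..b, e x) + ∫ x in a..b, r x :=
    intervalIntegral.integral_add hinte hintr
  have key : ∫ x in a..b, e x = F b - F a - ∫ x in a..b, r x := by
    rw [← hFTC, hsplit]; ring
  -- bound ‖F x‖
  have hFb : ∀ x ∈ Set.Icc a b, ‖F x‖ ≤ 1 / ρ := by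
    intro x hx
    have h1 : ‖F x‖ = 1 / |ψ' x| := by
      simp only [F, norm_div, Complex.norm_exp, norm_mul, Complex.norm_I,
        Complex.norm_real, Real.norm_eq_abs, one_mul]
      rw [show (Complex.I * (ψ x:ℂ)).re = 0 by simp, Real.exp_zero]
    rw [h1, abs_of_pos (hpos x hx)]
    exact one_div_le_one_div_of_le hρ (hlow x hx)
  -- bound the remainder integral
  have hnr : ∀ x, ‖r x‖ = |ψ'' x| / (ψ' x)^2 := by
    intro x
    simp only [r, norm_div, norm_mul, Complex.norm_I, Complex.norm_exp,
      Complex.norm_real, one_mul]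
    rw [show (Complex.I * (ψ x:ℂ)).re = 0 by simp, Real.exp_zero]
    simp [abs_of_nonneg (sq_nonneg (ψ' x)), ← Complex.ofReal_pow]
  have hG : ∀ x ∈ Set.Icc a b, HasDerivAt (fun y => -(ψ' y)⁻¹) (ψ'' x / (ψ' x)^2) x := by
    intro x hx
    have := ((hd2 x).inv (hpos x hx).ne').neg
    apply this.congr_deriv
    field_simp
  have hcG : ContinuousOn (fun x => ψ'' x / (ψ' x)^2) (Set.Icc a b) := by
    apply ContinuousOn.div
    · fun_prop
    · fun_prop
    · intro x hx; exact pow_ne_zero _ (hpos x hx).ne'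
  have hintG : IntervalIntegrable (fun x => ψ'' x / (ψ' x)^2) volume a b :=
    (hcG.mono (by rw [huIcc])).intervalIntegrable
  have hFTC2 : ∫ x in a..b, ψ'' x / (ψ' x)^2 = (ψ' a)⁻¹ - (ψ' b)⁻¹ := by
    rw [intervalIntegral.integral_eq_sub_of_hasDerivAt
      (fun x hx => hG x (huIcc ▸ hx)) hintG]
    ring
  have hinv : (ψ' a)⁻¹ ≤ 1/ρ ∧ (ψ' b)⁻¹ ≤ 1/ρ ∧ 0 < (ψ' a)⁻¹ ∧ 0 < (ψ' b)⁻¹ := by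
    have ha : a ∈ Set.Icc a b := ⟨le_refl a, hab⟩
    have hb : b ∈ Set.Icc a b := ⟨hab, le_refl b⟩
    refine ⟨?_, ?_, inv_pos.2 (hpos a ha), inv_pos.2 (hpos b hb)⟩
    · rw [inv_eq_one_div]; exact one_div_le_one_div_of_le hρ (hlow a ha)
    · rw [inv_eq_one_div]; exact one_div_le_one_div_of_le hρ (hlow b hb)
  have hrem : ‖∫ x in a..b, r x‖ ≤ 1 / ρ := by
    calc ‖∫ x in a..b, r x‖ ≤ ∫ x in a..b, ‖r x‖ :=
          intervalIntegral.norm_integral_le_integral_norm hab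
      _ ≤ 1 / ρ := by
          rcases hsgn with hp | hn
          · have : ∫ x in a..b, ‖r x‖ = ∫ x in a..b, ψ'' x / (ψ' x)^2 := by
              apply intervalIntegral.integral_congr
              intro x hx
              rw [huIcc] at hx
              show ‖r x‖ = _
              rw [hnr x, abs_of_nonneg (hp x hx)]
            rw [this, hFTC2]
            linarith [hinv.1, hinv.2.2.2]
          · have : ∫ x in a..b, ‖r x‖ = ∫ x in a..b, -(ψ'' x / (ψ' x)^2) := by
              apply intervalIntegral.integral_congr
              intro x hx
              rw [huIcc] at hx
              show ‖r x‖ = _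
              rw [hnr x, abs_of_nonpos (hn x hx)]
              ring
            rw [this, intervalIntegral.integral_neg, hFTC2]
            linarith [hinv.2.1, hinv.2.2.1]
  calc ‖∫ x in a..b, Complex.exp (Complex.I * ψ x)‖
      = ‖F b - F a - ∫ x in a..b, r x‖ := by rw [← key]
    _ ≤ ‖F b‖ + ‖F a‖ + ‖∫ x in a..b, r x‖ := by
        exact le_trans (norm_sub_le _ _) (add_le_add (norm_sub_le _ _) le_rfl)
    _ ≤ 1/ρ + 1/ρ + 1/ρ := by
        exact add_le_add (add_le_add (hFb b ⟨hab, le_refl b⟩) (hFb a ⟨le_refl a, hab⟩)) hrem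
    _ = 3 / ρ := by ring

lemma conj_exp_I_real (s : ℝ) :
    (starRingEnd ℂ) (Complex.exp (Complex.I * s)) = Complex.exp (Complex.I * ((-s : ℝ) : ℂ)) := by
  rw [← Complex.exp_conj]
  congr 1
  simp [Complex.conj_I]

/-- First-derivative van der Corput, negative `ψ'` case. -/
lemma vdc1_neg (ψ ψ' ψ'' : ℝ → ℝ) (a b ρ : ℝ) (hab : a ≤ b) (hρ : 0 < ρ)
    (hd1 : ∀ x, HasDerivAt ψ (ψ' x) x) (hd2 : ∀ x, HasDerivAt ψ' (ψ'' x) x)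
    (hc2 : Continuous ψ'')
    (hlow : ∀ x ∈ Set.Icc a b, ψ' x ≤ -ρ)
    (hsgn : (∀ x ∈ Set.Icc a b, 0 ≤ ψ'' x) ∨ (∀ x ∈ Set.Icc a b, ψ'' x ≤ 0)) :
    ‖∫ x in a..b, Complex.exp (Complex.I * ψ x)‖ ≤ 3 / ρ := by
  have h := vdc1_pos (fun x => -ψ x) (fun x => -ψ' x) (fun x => -ψ'' x) a b ρ hab hρ
    (fun x => (hd1 x).neg) (fun x => (hd2 x).neg) hc2.neg
    (fun x hx => by have := hlow x hx; linarith)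
    (by rcases hsgn with h | h
        · exact Or.inr (fun x hx => by linarith [h x hx])
        · exact Or.inl (fun x hx => by linarith [h x hx]))
  calc ‖∫ x in a..b, Complex.exp (Complex.I * ψ x)‖
      = ‖(starRingEnd ℂ) (∫ x in a..b, Complex.exp (Complex.I * ψ x))‖ :=
        (RCLike.norm_conj _).symm
    _ = ‖∫ x in a..b, Complex.exp (Complex.I * ((-ψ x : ℝ) : ℂ))‖ := by
        rw [← my_interval_integral_conj]
        exact congrArg norm
          (intervalIntegral.integral_congr fun x _ => conj_exp_I_real (ψ x))
    _ ≤ 3 / ρ := by simpa using h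

/-- Second-derivative van der Corput, `ψ'' ≥ μ` case. -/
lemma vdc2_pos (ψ ψ' ψ'' : ℝ → ℝ) (a b μ : ℝ) (hab : a ≤ b) (hμ : 0 < μ)
    (hd1 : ∀ x, HasDerivAt ψ (ψ' x) x) (hd2 : ∀ x, HasDerivAt ψ' (ψ'' x) x)
    (hc2 : Continuous ψ'')
    (hlow : ∀ x ∈ Set.Icc a b, μ ≤ ψ'' x) :
    ‖∫ x in a..b, Complex.exp (Complex.I * ψ x)‖ ≤ 8 / Real.sqrt μ := by
  set ρ := Real.sqrt μ with hρdef
  have hρ : 0 < ρ := Real.sqrt_pos.2 hμ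
  have hρsq : ρ * ρ = μ := Real.mul_self_sqrt hμ.le
  have hc1 : Continuous ψ' := continuous_iff_continuousAt.2 fun x => (hd2 x).continuousAt
  have hc0 : Continuous ψ := continuous_iff_continuousAt.2 fun x => (hd1 x).continuousAt
  set e : ℝ → ℂ := fun x => Complex.exp (Complex.I * ψ x) with he
  have hce : Continuous e := by fun_prop
  -- quantitative monotonicity of ψ'
  have h2 : ∀ u ∈ Set.Icc a b, ∀ v ∈ Set.Icc a b, u ≤ v → μ * (v - u) ≤ ψ' v - ψ' u := by
    intro u hu v hv huv
    have hg : MonotoneOn (fun x => ψ' x - μ * x) (Set.Icc a b) := by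
      apply monotoneOn_of_deriv_nonneg (convex_Icc a b)
      · fun_prop
      · intro x hx
        exact ((hd2 x).sub ((hasDerivAt_id x).const_mul μ)).differentiableAt.differentiableWithinAt
      · intro x hx
        have hd : HasDerivAt (fun x => ψ' x - μ * x) (ψ'' x - μ) x := by
          have := (hd2 x).sub ((hasDerivAt_id x).const_mul μ)
          simp only [id_eq, mul_one] at this
          exact this
        rw [hd.deriv]
        have : x ∈ Set.Icc a b := interior_subset hx
        linarith [hlow x this]
    have := hg hu hv huv
    simp only at this
    linarith
  have hsgn : (∀ x ∈ Set.Icc a b, 0 ≤ ψ'' x) ∨ (∀ x ∈ Set.Icc a b, ψ'' x ≤ 0) :=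
    Or.inl (fun x hx => le_trans hμ.le (hlow x hx))
  -- construct u
  have hu_ex : ∃ u, u ∈ Set.Icc a b ∧ (-ρ ≤ ψ' u ∨ u = b) ∧
      ‖∫ x in a..u, e x‖ ≤ 3/ρ ∧ (ψ' u ≤ -ρ ∨ u = a) := by
    by_cases hA : -ρ ≤ ψ' a
    · refine ⟨a, ⟨le_refl a, hab⟩, Or.inl hA, ?_, Or.inr rfl⟩
      rw [intervalIntegral.integral_same, norm_zero]
      positivity
    · by_cases hB : ψ' b ≤ -ρ
      · refine ⟨b, ⟨hab, le_refl b⟩, Or.inr rfl, ?_, Or.inl hB⟩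
        apply vdc1_neg ψ ψ' ψ'' a b ρ hab hρ hd1 hd2 hc2 _ hsgn
        intro x hx
        have := h2 x hx b ⟨hab, le_refl b⟩ hx.2
        nlinarith [mul_nonneg hμ.le (sub_nonneg.2 hx.2)]
      · obtain ⟨u, hu_mem, hu_eq⟩ : ∃ u ∈ Set.Icc a b, ψ' u = -ρ := by
          have := intermediate_value_Icc hab hc1.continuousOn
          have hmem : -ρ ∈ Set.Icc (ψ' a) (ψ' b) := ⟨(not_le.1 hA).le, (not_le.1 hB).le⟩
          obtain ⟨u, hu, hequ⟩ := this hmem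
          exact ⟨u, hu, hequ⟩
        refine ⟨u, hu_mem, Or.inl hu_eq.ge, ?_, Or.inl hu_eq.le⟩
        apply vdc1_neg ψ ψ' ψ'' a u ρ hu_mem.1 hρ hd1 hd2 hc2 _ ?_
        · intro x hx
          have hx' : x ∈ Set.Icc a b := ⟨hx.1, le_trans hx.2 hu_mem.2⟩
          have := h2 x hx' u hu_mem hx.2
          nlinarith [mul_nonneg hμ.le (sub_nonneg.2 hx.2)]
        · rcases hsgn with h | h
          · exact Or.inl fun x hx => h x ⟨hx.1, le_trans hx.2 hu_mem.2⟩
          · exact Or.inr fun x hx => h x ⟨hx.1, le_trans hx.2 hu_mem.2⟩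
  -- construct v
  have hv_ex : ∃ v, v ∈ Set.Icc a b ∧ (ψ' v ≤ ρ ∨ v = a) ∧
      ‖∫ x in v..b, e x‖ ≤ 3/ρ ∧ (ρ ≤ ψ' v ∨ v = b) := by
    by_cases hA : ψ' b ≤ ρ
    · refine ⟨b, ⟨hab, le_refl b⟩, Or.inl hA, ?_, Or.inr rfl⟩
      rw [intervalIntegral.integral_same, norm_zero]
      positivity
    · by_cases hB : ρ ≤ ψ' a
      · refine ⟨a, ⟨le_refl a, hab⟩, Or.inr rfl, ?_, Or.inl hB⟩
        apply vdc1_pos ψ ψ' ψ'' a b ρ hab hρ hd1 hd2 hc2 _ hsgn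
        intro x hx
        have := h2 a ⟨le_refl a, hab⟩ x hx hx.1
        nlinarith [mul_nonneg hμ.le (sub_nonneg.2 hx.1)]
      · obtain ⟨v, hv_mem, hv_eq⟩ : ∃ v ∈ Set.Icc a b, ψ' v = ρ := by
          have := intermediate_value_Icc hab hc1.continuousOn
          have hmem : ρ ∈ Set.Icc (ψ' a) (ψ' b) := ⟨(not_le.1 hB).le, (not_le.1 hA).le⟩
          obtain ⟨v, hv, heqv⟩ := this hmem
          exact ⟨v, hv, heqv⟩
        refine ⟨v, hv_mem, Or.inl hv_eq.le, ?_, Or.inl hv_eq.ge⟩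
        apply vdc1_pos ψ ψ' ψ'' v b ρ hv_mem.2 hρ hd1 hd2 hc2 _ ?_
        · intro x hx
          have hx' : x ∈ Set.Icc a b := ⟨le_trans hv_mem.1 hx.1, hx.2⟩
          have := h2 v hv_mem x hx' hx.1
          nlinarith [mul_nonneg hμ.le (sub_nonneg.2 hx.1)]
        · rcases hsgn with h | h
          · exact Or.inl fun x hx => h x ⟨le_trans hv_mem.1 hx.1, hx.2⟩
          · exact Or.inr fun x hx => h x ⟨le_trans hv_mem.1 hx.1, hx.2⟩
  obtain ⟨u, hu_mem, hu2, hu3, hu4⟩ := hu_ex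
  obtain ⟨v, hv_mem, hv2, hv3, hv4⟩ := hv_ex
  have huv : u ≤ v := by
    by_contra hcon
    push_neg at hcon
    rcases hu4 with hu4 | rfl
    · rcases hv4 with hv4 | rfl
      · have := h2 v hv_mem u hu_mem hcon.le
        nlinarith
      · exact absurd hcon (not_lt.2 hu_mem.2)
    · exact absurd hcon (not_lt.2 hv_mem.1)
  have hlen : v - u ≤ 2 * ρ / μ := by
    have hpos2 : (0:ℝ) ≤ 2 * ρ / μ := by positivity
    rcases hu2 with hu2 | hueq
    · rcases hv2 with hv2 | hveq
      · have := h2 u hu_mem v hv_mem huv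
        rw [le_div_iff₀ hμ]
        nlinarith
      · have hz : v - u ≤ 0 := by rw [hveq]; linarith [hu_mem.1]
        linarith
    · have hz : v - u ≤ 0 := by rw [hueq]; linarith [hv_mem.2]
      linarith
  -- split the integral
  have hi1 : IntervalIntegrable e volume a u := hce.intervalIntegrable _ _
  have hi2 : IntervalIntegrable e volume u v := hce.intervalIntegrable _ _
  have hi3 : IntervalIntegrable e volume v b := hce.intervalIntegrable _ _
  have hsplit : ∫ x in a..b, e x =
      (∫ x in a..u, e x) + (∫ x in u..v, e x) + ∫ x in v..b, e x := by
    have hs1 := intervalIntegral.integral_add_adjacent_intervals hi1 (hi2.trans hi3)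
    have hs2 := intervalIntegral.integral_add_adjacent_intervals hi2 hi3
    rw [← hs1, ← hs2]
    ring
  have hmid : ‖∫ x in u..v, e x‖ ≤ 2 / ρ := by
    have h1 : ‖∫ x in u..v, e x‖ ≤ 1 * |v - u| := by
      apply intervalIntegral.norm_integral_le_of_norm_le_const
      intro x _
      simp only [e]
      rw [show (Complex.I * (ψ x:ℂ)) = ((ψ x : ℝ):ℂ) * Complex.I by ring]
      rw [Complex.norm_exp_ofReal_mul_I]
    rw [one_mul, abs_of_nonneg (by linarith)] at h1
    have : 2 * ρ / μ = 2 / ρ := by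
      rw [div_eq_div_iff hμ.ne' hρ.ne', mul_assoc, hρsq]
    linarith [this ▸ hlen]
  calc ‖∫ x in a..b, e x‖
      ≤ ‖∫ x in a..u, e x‖ + ‖∫ x in u..v, e x‖ + ‖∫ x in v..b, e x‖ := by
        rw [hsplit]
        exact le_trans (norm_add_le _ _) (add_le_add (norm_add_le _ _) le_rfl)
    _ ≤ 3/ρ + 2/ρ + 3/ρ := add_le_add (add_le_add hu3 hmid) hv3
    _ = 8 / ρ := by ring

/-- Second-derivative van der Corput, `ψ'' ≤ -μ` case. -/
lemma vdc2_neg (ψ ψ' ψ'' : ℝ → ℝ) (a b μ : ℝ) (hab : a ≤ b) (hμ : 0 < μ)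
    (hd1 : ∀ x, HasDerivAt ψ (ψ' x) x) (hd2 : ∀ x, HasDerivAt ψ' (ψ'' x) x)
    (hc2 : Continuous ψ'')
    (hlow : ∀ x ∈ Set.Icc a b, ψ'' x ≤ -μ) :
    ‖∫ x in a..b, Complex.exp (Complex.I * ψ x)‖ ≤ 8 / Real.sqrt μ := by
  have h := vdc2_pos (fun x => -ψ x) (fun x => -ψ' x) (fun x => -ψ'' x) a b μ hab hμ
    (fun x => (hd1 x).neg) (fun x => (hd2 x).neg) hc2.neg
    (fun x hx => by have := hlow x hx; linarith)
  calc ‖∫ x in a..b, Complex.exp (Complex.I * ψ x)‖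
      = ‖(starRingEnd ℂ) (∫ x in a..b, Complex.exp (Complex.I * ψ x))‖ :=
        (RCLike.norm_conj _).symm
    _ = ‖∫ x in a..b, Complex.exp (Complex.I * ((-ψ x : ℝ) : ℂ))‖ := by
        rw [← my_interval_integral_conj]
        exact congrArg norm
          (intervalIntegral.integral_congr fun x _ => conj_exp_I_real (ψ x))
    _ ≤ 8 / Real.sqrt μ := by simpa using h

section Kernel

/-- Phase of the discrete Schrödinger kernel. -/
noncomputable def ker_phase (t : ℝ) (j : ℤ) (ξ : ℝ) : ℝ := j * ξ - 4 * t * (Real.sin (ξ/2))^2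

noncomputable def ker_phase' (t : ℝ) (j : ℤ) (ξ : ℝ) : ℝ := j - 2 * t * Real.sin ξ

noncomputable def ker_phase'' (t : ℝ) (ξ : ℝ) : ℝ := -2 * t * Real.cos ξ

lemma ker_phase_hasDeriv (t : ℝ) (j : ℤ) (ξ : ℝ) :
    HasDerivAt (ker_phase t j) (ker_phase' t j ξ) ξ := by
  have h1 : HasDerivAt (fun ξ : ℝ => (j:ℝ) * ξ) (j:ℝ) ξ := by
    simpa using (hasDerivAt_id ξ).const_mul (j:ℝ)
  have h2 : HasDerivAt (fun ξ : ℝ => Real.sin (ξ/2)) (Real.cos (ξ/2) * (1/2)) ξ := by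
    have := (Real.hasDerivAt_sin (ξ/2)).comp ξ ((hasDerivAt_id ξ).div_const 2)
    exact this
  have h3 : HasDerivAt (fun ξ : ℝ => (Real.sin (ξ/2))^2)
      (2 * Real.sin (ξ/2) * (Real.cos (ξ/2) * (1/2))) ξ := by
    have := h2.pow 2
    exact this.congr_deriv (by norm_num)
  have h4 := h1.sub ((h3.const_mul (4*t)))
  apply h4.congr_deriv
  have hs : Real.sin ξ = 2 * Real.sin (ξ/2) * Real.cos (ξ/2) := by
    rw [← Real.sin_two_mul]
    congr 1
    ring
  simp only [ker_phase']
  rw [hs]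
  ring

lemma ker_phase'_hasDeriv (t : ℝ) (j : ℤ) (ξ : ℝ) :
    HasDerivAt (ker_phase' t j) (ker_phase'' t ξ) ξ := by
  have h1 : HasDerivAt (fun ξ : ℝ => 2 * t * Real.sin ξ) (2 * t * Real.cos ξ) ξ :=
    (Real.hasDerivAt_sin ξ).const_mul (2*t)
  have := (hasDerivAt_const ξ (j:ℝ)).sub h1
  apply this.congr_deriv
  simp [ker_phase'']

lemma kernel_repr (t : ℝ) (j : ℤ) :
    schrodingerKernel t j = (1 / (2 * Real.pi)) *
      ∫ ξ in (-Real.pi)..Real.pi, Complex.exp (Complex.I * (ker_phase t j ξ : ℂ)) := by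
  unfold schrodingerKernel
  congr 1
  apply intervalIntegral.integral_congr
  intro ξ _
  simp only
  rw [← Complex.exp_add]
  congr 1
  unfold ker_phase
  push_cast
  ring

end Kernel

set_option maxHeartbeats 1000000 in
lemma kernel_decay (t : ℝ) (ht : 1 ≤ |t|) (j : ℤ) :
    ‖schrodingerKernel t j‖ ≤ 5 * (2*|t|) ^ (-(1/3) : ℝ) := by
  have hπ := Real.pi_pos
  set lam := 2 * |t| with hlam
  have hlam1 : 1 ≤ lam := by rw [hlam]; linarith
  have hlampos : 0 < lam := by linarith
  set δ := lam ^ (-(1/3) : ℝ) with hδ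
  have hδpos : 0 < δ := Real.rpow_pos_of_pos hlampos _
  have hδ1 : δ ≤ 1 := Real.rpow_le_one_of_one_le_of_nonpos hlam1 (by norm_num)
  set μ := lam * δ with hμdef
  have hμpos : 0 < μ := by positivity
  have hsqrtμ : Real.sqrt μ = lam ^ ((1:ℝ)/3) := by
    have h1 : μ = lam ^ ((2:ℝ)/3) := by
      rw [hμdef, hδ]
      rw [show lam * lam ^ (-(1/3):ℝ) = lam ^ (1:ℝ) * lam ^ (-(1/3):ℝ) by rw [Real.rpow_one]]
      rw [← Real.rpow_add hlampos]
      norm_num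
    rw [h1, Real.sqrt_eq_rpow, ← Real.rpow_mul hlampos.le]
    norm_num
  have h8 : 8 / Real.sqrt μ = 8 * δ := by
    rw [hsqrtμ, hδ, show (-(1/3):ℝ) = -((1:ℝ)/3) by norm_num, Real.rpow_neg hlampos.le,
      div_eq_mul_inv]
  set c := Real.arccos δ with hc
  have hc0 : 0 ≤ c := Real.arccos_nonneg δ
  have hc2 : c ≤ π/2 := Real.arccos_le_pi_div_two.2 hδpos.le
  have hcos : Real.cos c = δ := Real.cos_arccos (by linarith) hδ1
  have hgap : π/2 - c ≤ π/2 * δ := by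
    have harc : c = π/2 - Real.arcsin δ := Real.arccos_eq_pi_div_two_sub_arcsin δ
    have h0 : 0 ≤ Real.arcsin δ := Real.arcsin_nonneg.2 hδpos.le
    have h1 := Real.mul_le_sin h0 (Real.arcsin_le_pi_div_two δ)
    rw [Real.sin_arcsin (by linarith) hδ1] at h1
    have h2 : Real.arcsin δ ≤ π/2*δ := by
      have h3 := mul_le_mul_of_nonneg_left h1 (le_of_lt (by positivity : (0:ℝ) < π/2))
      calc Real.arcsin δ = π/2 * (2/π * Real.arcsin δ) := by field_simp
        _ ≤ π/2 * δ := h3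
    rw [harc]; linarith
  have hord1 : -π ≤ c - π := by linarith
  have hord2 : c - π ≤ -c := by linarith
  have hord3 : -c ≤ c := by linarith
  have hord4 : c ≤ π - c := by linarith
  have hord5 : π - c ≤ π := by linarith
  have hd1 := ker_phase_hasDeriv t j
  have hd2 := ker_phase'_hasDeriv t j
  have hc'' : Continuous (ker_phase'' t) := by unfold ker_phase''; fun_prop
  have ht0 : t ≠ 0 := by
    intro h; rw [h] at ht; simp at ht; linarith
  set e : ℝ → ℂ := fun x => Complex.exp (Complex.I * (ker_phase t j x : ℂ)) with he
  have hcp : Continuous (ker_phase t j) := continuous_iff_continuousAt.2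
    fun x => (hd1 x).continuousAt
  have hce : Continuous e := by fun_prop
  -- oscillatory bound on intervals where |cos| ≥ δ
  have hosc : ∀ a b : ℝ, a ≤ b → ((∀ x ∈ Set.Icc a b, δ ≤ Real.cos x) ∨
      (∀ x ∈ Set.Icc a b, Real.cos x ≤ -δ)) →
      ‖∫ x in a..b, e x‖ ≤ 8 * δ := by
    intro a b hab hcase
    rw [← h8]
    rcases lt_or_gt_of_ne ht0 with htneg | htpos
    · have habs : |t| = -t := abs_of_neg htneg
      rcases hcase with hcs | hcs
      · apply vdc2_pos (ker_phase t j) (ker_phase' t j) (ker_phase'' t) a b μ hab hμpos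
          hd1 hd2 hc''
        intro x hx
        unfold ker_phase''
        have hmul := mul_le_mul_of_nonneg_left (hcs x hx) (by linarith : (0:ℝ) ≤ -2*t)
        rw [hμdef, hlam, habs]
        nlinarith
      · apply vdc2_neg (ker_phase t j) (ker_phase' t j) (ker_phase'' t) a b μ hab hμpos
          hd1 hd2 hc''
        intro x hx
        unfold ker_phase''
        have hmul := mul_le_mul_of_nonneg_left (hcs x hx) (by linarith : (0:ℝ) ≤ -2*t)
        rw [hμdef, hlam, habs]
        nlinarith
    · have habs : |t| = t := abs_of_pos htpos
      rcases hcase with hcs | hcs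
      · apply vdc2_neg (ker_phase t j) (ker_phase' t j) (ker_phase'' t) a b μ hab hμpos
          hd1 hd2 hc''
        intro x hx
        unfold ker_phase''
        have hmul := mul_le_mul_of_nonneg_left (hcs x hx) (by linarith : (0:ℝ) ≤ 2*t)
        rw [hμdef, hlam, habs]
        nlinarith
      · apply vdc2_pos (ker_phase t j) (ker_phase' t j) (ker_phase'' t) a b μ hab hμpos
          hd1 hd2 hc''
        intro x hx
        unfold ker_phase''
        have hmul := mul_le_mul_of_nonneg_left (hcs x hx) (by linarith : (0:ℝ) ≤ 2*t)
        rw [hμdef, hlam, habs]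
        nlinarith
  -- trivial bound
  have htriv : ∀ a b : ℝ, a ≤ b → ‖∫ x in a..b, e x‖ ≤ b - a := by
    intro a b hab
    have h1 : ‖∫ x in a..b, e x‖ ≤ 1 * |b - a| := by
      apply intervalIntegral.norm_integral_le_of_norm_le_const
      intro x _
      simp only [e]
      rw [show Complex.I * ((ker_phase t j x : ℝ):ℂ) = ((ker_phase t j x : ℝ):ℂ) * Complex.I
        by ring, Complex.norm_exp_ofReal_mul_I]
    rwa [one_mul, abs_of_nonneg (by linarith)] at h1
  -- cosine bounds on pieces
  have hI1 : ∀ x ∈ Set.Icc (-π) (c - π), Real.cos x ≤ -δ := by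
    intro x hx
    have h1 := Real.cos_le_cos_of_nonneg_of_le_pi (by linarith : (0:ℝ) ≤ π - c)
      (by linarith [hx.1] : -x ≤ π) (by linarith [hx.2] : π - c ≤ -x)
    rw [Real.cos_neg, Real.cos_pi_sub, hcos] at h1
    exact h1
  have hI3 : ∀ x ∈ Set.Icc (-c) c, δ ≤ Real.cos x := by
    intro x hx
    have h1 := Real.cos_le_cos_of_nonneg_of_le_pi (abs_nonneg x)
      (by linarith : c ≤ π) (abs_le.2 ⟨hx.1, hx.2⟩)
    rwa [Real.cos_abs, hcos] at h1
  have hI5 : ∀ x ∈ Set.Icc (π - c) π, Real.cos x ≤ -δ := by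
    intro x hx
    have h1 := Real.cos_le_cos_of_nonneg_of_le_pi (by linarith : (0:ℝ) ≤ π - c)
      (hx.2) (hx.1)
    rwa [Real.cos_pi_sub, hcos] at h1
  -- split the integral
  have ii : ∀ a b : ℝ, IntervalIntegrable e volume a b := fun a b => hce.intervalIntegrable _ _
  have hsplit : ∫ x in (-π)..π, e x =
      (∫ x in (-π)..(c-π), e x) + (∫ x in (c-π)..(-c), e x) + (∫ x in (-c)..c, e x)
      + (∫ x in c..(π-c), e x) + (∫ x in (π-c)..π, e x) := by
    have e1 := intervalIntegral.integral_add_adjacent_intervals (ii (-π) (c-π)) (ii (c-π) π)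
    have e2 := intervalIntegral.integral_add_adjacent_intervals (ii (c-π) (-c)) (ii (-c) π)
    have e3 := intervalIntegral.integral_add_adjacent_intervals (ii (-c) c) (ii c π)
    have e4 := intervalIntegral.integral_add_adjacent_intervals (ii c (π-c)) (ii (π-c) π)
    rw [← e1, ← e2, ← e3, ← e4]
    ring
  have hgap2 : π - 2*c ≤ π * δ := by linarith
  have htot : ‖∫ x in (-π)..π, e x‖ ≤ 24 * δ + 2 * π * δ := by
    rw [hsplit]
    have b1 := hosc (-π) (c-π) hord1 (Or.inr hI1)
    have b2 := htriv (c-π) (-c) hord2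
    have b3 := hosc (-c) c hord3 (Or.inl hI3)
    have b4 := htriv c (π-c) hord4
    have b5 := hosc (π-c) π hord5 (Or.inr hI5)
    have hn : ∀ z w u v s : ℂ, ‖z + w + u + v + s‖ ≤ ‖z‖ + ‖w‖ + ‖u‖ + ‖v‖ + ‖s‖ := by
      intro z w u v s
      calc ‖z + w + u + v + s‖ ≤ ‖z + w + u + v‖ + ‖s‖ := norm_add_le _ _
        _ ≤ ‖z + w + u‖ + ‖v‖ + ‖s‖ := by linarith [norm_add_le (z+w+u) v]
        _ ≤ ‖z + w‖ + ‖u‖ + ‖v‖ + ‖s‖ := by linarith [norm_add_le (z+w) u]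
        _ ≤ ‖z‖ + ‖w‖ + ‖u‖ + ‖v‖ + ‖s‖ := by linarith [norm_add_le z w]
    calc ‖_ + _ + _ + _ + _‖ ≤ _ := hn _ _ _ _ _
      _ ≤ 8*δ + (-c - (c - π)) + 8*δ + ((π - c) - c) + 8*δ := by
          linarith
      _ ≤ 24 * δ + 2 * π * δ := by linarith
  -- assemble
  rw [kernel_repr, norm_mul]
  have hscal : ‖(1 / (2 * (Real.pi:ℂ)))‖ = 1/(2*π) := by
    simp [map_div₀, map_mul, abs_of_pos hπ]
  rw [hscal]
  have hfin : (1/(2*π)) * (24 * δ + 2*π*δ) ≤ 5 * δ := by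
    have hπ3 : 3 < π := Real.pi_gt_three
    rw [div_mul_eq_mul_div, div_le_iff₀ (by linarith : (0:ℝ) < 2*π)]
    have h9 : 3 * δ ≤ π * δ := mul_le_mul_of_nonneg_right hπ3.le hδpos.le
    nlinarith [h9]
  calc (1/(2*π)) * ‖∫ x in (-π)..π, e x‖ ≤ (1/(2*π)) * (24 * δ + 2*π*δ) := by
        apply mul_le_mul_of_nonneg_left htot
        positivity
    _ ≤ 5 * δ := hfin

lemma kernel_triv (t : ℝ) (j : ℤ) : ‖schrodingerKernel t j‖ ≤ 1 := by
  have hπ := Real.pi_pos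
  rw [kernel_repr, norm_mul]
  have hscal : ‖(1 / (2 * (Real.pi:ℂ)))‖ = 1/(2*π) := by
    simp [map_div₀, map_mul, abs_of_pos hπ]
  rw [hscal]
  have h1 : ‖∫ ξ in (-π)..π, Complex.exp (Complex.I * (ker_phase t j ξ : ℂ))‖
      ≤ 1 * |π - (-π)| := by
    apply intervalIntegral.norm_integral_le_of_norm_le_const
    intro x _
    rw [show Complex.I * ((ker_phase t j x : ℝ):ℂ) = ((ker_phase t j x : ℝ):ℂ) * Complex.I
      by ring, Complex.norm_exp_ofReal_mul_I]
  rw [one_mul, abs_of_nonneg (by linarith)] at h1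
  calc (1/(2*π)) * ‖∫ ξ in (-π)..π, Complex.exp (Complex.I * (ker_phase t j ξ : ℂ))‖
      ≤ (1/(2*π)) * (π - (-π)) := by
        apply mul_le_mul_of_nonneg_left h1
        positivity
    _ = 1 := by field_simp; ring

lemma kernel_bound (t : ℝ) (j : ℤ) :
    ‖schrodingerKernel t j‖ ≤ 5 * (1 + |t|) ^ (-(1/3) : ℝ) := by
  rcases le_or_gt (|t|) 1 with h | h
  · have h1 : (2:ℝ)^(-(1/3):ℝ) ≤ (1+|t|)^(-(1/3):ℝ) :=
      Real.rpow_le_rpow_of_nonpos (by positivity) (by linarith) (by norm_num)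
    have h2 : (2:ℝ)^(-1:ℝ) ≤ (2:ℝ)^(-(1/3):ℝ) :=
      Real.rpow_le_rpow_of_exponent_le one_le_two (by norm_num)
    have h3 : (2:ℝ)^(-1:ℝ) = 1/2 := by
      rw [Real.rpow_neg_one]; norm_num
    have := kernel_triv t j
    rw [h3] at h2
    linarith
  · have h2 : 1+|t| ≤ 2*|t| := by linarith
    have h3 : (2*|t|)^(-(1/3):ℝ) ≤ (1+|t|)^(-(1/3):ℝ) :=
      Real.rpow_le_rpow_of_nonpos (by positivity) h2 (by norm_num)
    have := kernel_decay t h.le j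
    linarith


/-- Dispersive decay for the discrete Schrödinger equation on the positive integers with
Dirichlet boundary condition at `j = 0`; the solution is given by odd reflection of the
whole-line kernel. -/
theorem discrete_schrodinger_dirichlet_decay :
    ∃ C > 0, ∀ (t : ℝ) (φ : {k : ℤ // 1 ≤ k} → ℂ),
      Summable (fun k : {k : ℤ // 1 ≤ k} => ‖φ k‖) →
      ∀ j : ℤ, 1 ≤ j →
        ‖∑' k : {k : ℤ // 1 ≤ k},
            (schrodingerKernel t (j - k.1) - schrodingerKernel t (j + k.1)) * φ k‖ ≤
          C * (1 + |t|) ^ (-(1 / 3 : ℝ)) * ∑' k : {k : ℤ // 1 ≤ k}, ‖φ k‖ := by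
  refine ⟨10, by norm_num, ?_⟩
  intro t φ hφ j _
  set B : ℝ := 10 * (1 + |t|) ^ (-(1/3 : ℝ)) with hB
  have hbound : ∀ k : {k : ℤ // 1 ≤ k},
      ‖(schrodingerKernel t (j - k.1) - schrodingerKernel t (j + k.1)) * φ k‖ ≤ B * ‖φ k‖ := by
    intro k
    rw [norm_mul]
    apply mul_le_mul_of_nonneg_right _ (norm_nonneg _)
    calc ‖schrodingerKernel t (j - k.1) - schrodingerKernel t (j + k.1)‖
        ≤ ‖schrodingerKernel t (j - k.1)‖ + ‖schrodingerKernel t (j + k.1)‖ := norm_sub_le _ _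
      _ ≤ 5 * (1 + |t|) ^ (-(1/3 : ℝ)) + 5 * (1 + |t|) ^ (-(1/3 : ℝ)) :=
          add_le_add (kernel_bound t _) (kernel_bound t _)
      _ = B := by rw [hB]; ring
  have hsum2 : Summable fun k : {k : ℤ // 1 ≤ k} => B * ‖φ k‖ := hφ.mul_left B
  have hsum1 : Summable fun k : {k : ℤ // 1 ≤ k} =>
      ‖(schrodingerKernel t (j - k.1) - schrodingerKernel t (j + k.1)) * φ k‖ :=
    Summable.of_nonneg_of_le (fun k => norm_nonneg _) hbound hsum2
  calc ‖∑' k : {k : ℤ // 1 ≤ k},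
          (schrodingerKernel t (j - k.1) - schrodingerKernel t (j + k.1)) * φ k‖
      ≤ ∑' k : {k : ℤ // 1 ≤ k},
          ‖(schrodingerKernel t (j - k.1) - schrodingerKernel t (j + k.1)) * φ k‖ :=
        norm_tsum_le_tsum_norm hsum1
    _ ≤ ∑' k : {k : ℤ // 1 ≤ k}, B * ‖φ k‖ := hsum1.tsum_le_tsum hbound hsum2
    _ = B * ∑' k : {k : ℤ // 1 ≤ k}, ‖φ k‖ := tsum_mul_left
    _ = 10 * (1 + |t|) ^ (-(1 / 3 : ℝ)) * ∑' k : {k : ℤ // 1 ≤ k}, ‖φ k‖ := by rw [hB]
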